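/- For the Renyi entropy function h_p(x) = (1/(1-p))·log₂(x^p + (1-x)^p) with p > 1, and any c ≥ 1 and x ∈ [0,1] with c·x ∈ [0,1], one has h_p(c·x) ≤ p·c·h_p(x). -/

import Mathlib

open Real Set

namespace RenyiAux

/-- `F p t = t^p + (1-t)^p`. -/
noncomputable def F (p t : ℝ) : ℝ := t ^ p + (1 - t) ^ p

/-- `G p t = - log (F p t)`. -/
noncomputable def G (p t : ℝ) : ℝ := -Real.log (F p t)

lemma F_pos {p : ℝ} (hp : 0 < p) {t : ℝ} (h0 : 0 ≤ t) (h1 : t ≤ 1) : 0 < F p t := by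
  rcases eq_or_lt_of_le h0 with rfl | h
  · simp [F, Real.zero_rpow (ne_of_gt hp)]
  · have h1' : (0:ℝ) < t ^ p := Real.rpow_pos_of_pos h p
    have h2 : (0:ℝ) ≤ (1 - t) ^ p := Real.rpow_nonneg (by linarith) p
    unfold F; linarith

lemma F_le_one {p : ℝ} (hp : 1 ≤ p) {t : ℝ} (h0 : 0 ≤ t) (h1 : t ≤ 1) : F p t ≤ 1 := by
  have key : ∀ s : ℝ, 0 ≤ s → s ≤ 1 → s ^ p ≤ s := by
    intro s hs0 hs1
    rcases eq_or_lt_of_le hs0 with rfl | h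
    · rw [Real.zero_rpow (by linarith : p ≠ 0)]
    · calc s ^ p ≤ s ^ (1:ℝ) := Real.rpow_le_rpow_of_exponent_ge h hs1 hp
        _ = s := Real.rpow_one s
  have k1 := key t h0 h1
  have k2 := key (1 - t) (by linarith) (by linarith)
  unfold F; linarith

lemma G_nonneg {p : ℝ} (hp : 1 ≤ p) {t : ℝ} (h0 : 0 ≤ t) (h1 : t ≤ 1) : 0 ≤ G p t := by
  have := Real.log_nonpos (F_pos (by linarith) h0 h1).le (F_le_one hp h0 h1)
  unfold G; linarith

lemma F_continuousOn {p : ℝ} (hp : 0 < p) : ContinuousOn (F p) (Set.Icc (0:ℝ) 1) := by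
  have h1 : Continuous fun t : ℝ => t ^ p := by
    apply continuous_iff_continuousAt.2
    intro t
    exact Real.continuousAt_rpow_const t p (Or.inr hp.le)
  have h2 : Continuous fun t : ℝ => (1 - t) ^ p := by
    apply continuous_iff_continuousAt.2
    intro t
    exact (Real.continuousAt_rpow_const (1 - t) p (Or.inr hp.le)).comp
      ((by fun_prop : Continuous fun t : ℝ => 1 - t).continuousAt)
  exact (h1.add h2).continuousOn

lemma G_continuousOn {p : ℝ} (hp : 0 < p) : ContinuousOn (G p) (Set.Icc (0:ℝ) 1) := by
  have : ContinuousOn (fun t => Real.log (F p t)) (Set.Icc (0:ℝ) 1) :=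
    (F_continuousOn hp).log (fun t ht => (F_pos hp ht.1 ht.2).ne')
  exact this.neg

lemma hasDerivAt_F {p : ℝ} (hp : 1 < p) {t : ℝ} (h0 : 0 < t) (h1 : t < 1) :
    HasDerivAt (F p) (p * t ^ (p - 1) - p * (1 - t) ^ (p - 1)) t := by
  have hA : HasDerivAt (fun s : ℝ => s ^ p) (p * t ^ (p - 1)) t :=
    Real.hasDerivAt_rpow_const (Or.inl h0.ne')
  have hbase : HasDerivAt (fun s : ℝ => 1 - s) (-1) t := by
    simpa using (hasDerivAt_id t).const_sub 1
  have hB : HasDerivAt (fun s : ℝ => (1 - s) ^ p) (-1 * p * (1 - t) ^ (p - 1)) t :=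
    hbase.rpow_const (Or.inl (by linarith : (1:ℝ) - t ≠ 0))
  have := hA.add hB
  refine this.congr_deriv ?_
  ring

lemma hasDerivAt_F1 {p : ℝ} (hp : 1 < p) {t : ℝ} (h0 : 0 < t) (h1 : t < 1) :
    HasDerivAt (fun s => p * s ^ (p - 1) - p * (1 - s) ^ (p - 1))
      (p * (p - 1) * t ^ (p - 2) + p * (p - 1) * (1 - t) ^ (p - 2)) t := by
  have hA : HasDerivAt (fun s : ℝ => s ^ (p - 1)) ((p - 1) * t ^ (p - 1 - 1)) t :=
    Real.hasDerivAt_rpow_const (Or.inl h0.ne')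
  have hbase : HasDerivAt (fun s : ℝ => 1 - s) (-1) t := by
    simpa using (hasDerivAt_id t).const_sub 1
  have hB : HasDerivAt (fun s : ℝ => (1 - s) ^ (p - 1))
      (-1 * (p - 1) * (1 - t) ^ (p - 1 - 1)) t :=
    hbase.rpow_const (Or.inl (by linarith : (1:ℝ) - t ≠ 0))
  have h := (hA.const_mul p).sub (hB.const_mul p)
  have he : p - 1 - 1 = p - 2 := by ring
  rw [he] at h
  refine h.congr_deriv ?_
  ring

/-- Pure algebra part of the key inequality. -/
lemma key_alg {p t s a b : ℝ} (hp : 1 < p) (ht : 0 < t) (hs : 0 < s)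
    (ha0 : 0 < a) (hb0 : 0 < b)
    (hy1 : a * s ≤ (p - 1) * t * b + (2 - p) * (s * b))
    (hy2 : b * t ≤ (p - 1) * s * a + (2 - p) * (t * a)) :
    (p * a - p * b) ^ 2 ≤ (p * (p - 1) * (a / t) + p * (p - 1) * (b / s)) * (t * a + s * b) := by
  have hp0 : (0:ℝ) < p := by linarith
  have hts : 0 < t * s := mul_pos ht hs
  have hrw : (p * (p - 1) * (a / t) + p * (p - 1) * (b / s)) * (t * a + s * b)
      = p * (p - 1) * ((t * s) * (a * a + b * b) + (a * b) * (t * t + s * s)) / (t * s) := by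
    field_simp
    ring
  rw [hrw, le_div_iff₀ hts]
  have e1 : a * s * (a * t) ≤ ((p - 1) * t * b + (2 - p) * (s * b)) * (a * t) :=
    mul_le_mul_of_nonneg_right hy1 (by positivity)
  have e2 : b * t * (b * s) ≤ ((p - 1) * s * a + (2 - p) * (t * a)) * (b * s) :=
    mul_le_mul_of_nonneg_right hy2 (by positivity)
  have hsum : t * s * (a * a) + t * s * (b * b) ≤
      (p - 1) * (t * t) * (a * b) + (p - 1) * (s * s) * (a * b)
        + 2 * (2 - p) * (t * s) * (a * b) := by nlinarith [e1, e2]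
  have hsum2 := mul_le_mul_of_nonneg_left hsum hp0.le
  have h3 : 0 ≤ (4 * p * p - 4 * p) * (t * s * (a * b)) := by
    have h3a : (0:ℝ) ≤ 4 * p * p - 4 * p := by nlinarith
    have h3b : (0:ℝ) ≤ t * s * (a * b) := by positivity
    exact mul_nonneg h3a h3b
  nlinarith [hsum2, h3]

/-- The key inequality: `F1^2 ≤ F2 * F` for `1 < p ≤ 2`, `0 < t < 1`. -/
lemma key_ineq {p : ℝ} (hp : 1 < p) (hp2 : p ≤ 2) {t : ℝ} (h0 : 0 < t) (h1 : t < 1) :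
    (p * t ^ (p - 1) - p * (1 - t) ^ (p - 1)) ^ 2 ≤
      (p * (p - 1) * t ^ (p - 2) + p * (p - 1) * (1 - t) ^ (p - 2)) * F p t := by
  have hp0 : (0:ℝ) < p := by linarith
  set s : ℝ := 1 - t with hs
  have hs0 : 0 < s := by rw [hs]; linarith
  set a : ℝ := t ^ (p - 1) with ha
  set b : ℝ := s ^ (p - 1) with hb
  have ha0 : 0 < a := Real.rpow_pos_of_pos h0 _
  have hb0 : 0 < b := Real.rpow_pos_of_pos hs0 _
  have htp : t ^ p = t * a := by
    conv_lhs => rw [show p = 1 + (p - 1) by ring]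
    rw [Real.rpow_add h0, Real.rpow_one, ha]
  have hsp : s ^ p = s * b := by
    conv_lhs => rw [show p = 1 + (p - 1) by ring]
    rw [Real.rpow_add hs0, Real.rpow_one, hb]
  have htp2 : t ^ (p - 2) = a / t := by
    rw [ha]
    conv_rhs => rw [show p - 1 = 1 + (p - 2) by ring]
    rw [Real.rpow_add h0, Real.rpow_one]
    field_simp
  have hsp2 : s ^ (p - 2) = b / s := by
    rw [hb]
    conv_rhs => rw [show p - 1 = 1 + (p - 2) by ring]
    rw [Real.rpow_add hs0, Real.rpow_one]
    field_simp
  have young : ∀ r : ℝ, 0 ≤ r → r ^ (p - 1) ≤ (p - 1) * r + (2 - p) := by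
    intro r hr
    have := Real.geom_mean_le_arith_mean2_weighted
      (by linarith : (0:ℝ) ≤ p - 1) (by linarith : (0:ℝ) ≤ 2 - p)
      hr (zero_le_one) (by ring)
    simpa using this
  have hy1 : a * s ≤ (p - 1) * t * b + (2 - p) * (s * b) := by
    have hyy := young (t / s) (by positivity)
    rw [Real.div_rpow h0.le hs0.le, ← ha, ← hb] at hyy
    have h' := mul_le_mul_of_nonneg_right hyy (le_of_lt (by positivity : (0:ℝ) < b * s))
    calc a * s = a / b * (b * s) := by field_simp
      _ ≤ ((p - 1) * (t / s) + (2 - p)) * (b * s) := h'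
      _ = (p - 1) * t * b + (2 - p) * (s * b) := by field_simp
  have hy2 : b * t ≤ (p - 1) * s * a + (2 - p) * (t * a) := by
    have hyy := young (s / t) (by positivity)
    rw [Real.div_rpow hs0.le h0.le, ← ha, ← hb] at hyy
    have h' := mul_le_mul_of_nonneg_right hyy (le_of_lt (by positivity : (0:ℝ) < a * t))
    calc b * t = b / a * (a * t) := by field_simp
      _ ≤ ((p - 1) * (s / t) + (2 - p)) * (a * t) := h'
      _ = (p - 1) * s * a + (2 - p) * (t * a) := by field_simp
  have hF : F p t = t * a + s * b := by rw [F, ← hs, htp, hsp]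
  rw [hF, htp2, hsp2]
  clear_value a b
  clear ha hb htp hsp htp2 hsp2 young hF
  clear_value s
  exact key_alg hp h0 hs0 ha0 hb0 hy1 hy2

/-- Concavity of `G p` on `[0,1]` for `1 < p ≤ 2`. -/
lemma concaveG {p : ℝ} (hp : 1 < p) (hp2 : p ≤ 2) :
    ConcaveOn ℝ (Set.Icc (0:ℝ) 1) (G p) := by
  have hp0 : (0:ℝ) < p := by linarith
  set G1 : ℝ → ℝ := fun t => -((p * t ^ (p - 1) - p * (1 - t) ^ (p - 1)) / F p t) with hG1def
  set G2 : ℝ → ℝ := fun t =>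
    -(((p * (p - 1) * t ^ (p - 2) + p * (p - 1) * (1 - t) ^ (p - 2)) * F p t -
        (p * t ^ (p - 1) - p * (1 - t) ^ (p - 1)) * (p * t ^ (p - 1) - p * (1 - t) ^ (p - 1))) /
      F p t ^ 2) with hG2def
  apply concaveOn_of_hasDerivWithinAt2_nonpos (f' := G1) (f'' := G2) (convex_Icc 0 1)
    (G_continuousOn hp0)
  · intro t ht
    rw [interior_Icc] at ht
    have hFt : F p t ≠ 0 := (F_pos hp0 ht.1.le ht.2.le).ne'
    have h := ((hasDerivAt_F hp ht.1 ht.2).log hFt).neg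
    exact h.hasDerivWithinAt
  · intro t ht
    rw [interior_Icc] at ht
    have hFt : F p t ≠ 0 := (F_pos hp0 ht.1.le ht.2.le).ne'
    have h := (((hasDerivAt_F1 hp ht.1 ht.2).div (hasDerivAt_F hp ht.1 ht.2) hFt)).neg
    exact h.hasDerivWithinAt
  · intro t ht
    rw [interior_Icc] at ht
    have hFt : (0:ℝ) < F p t := F_pos hp0 ht.1.le ht.2.le
    have hk := key_ineq hp hp2 ht.1 ht.2
    have hnn : 0 ≤ ((p * (p - 1) * t ^ (p - 2) + p * (p - 1) * (1 - t) ^ (p - 2)) * F p t -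
        (p * t ^ (p - 1) - p * (1 - t) ^ (p - 1)) * (p * t ^ (p - 1) - p * (1 - t) ^ (p - 1))) /
      F p t ^ 2 := by
      apply div_nonneg _ (sq_nonneg _)
      nlinarith [hk]
    simp only [hG2def]
    linarith

/-- F is monotone on [1/2, 1]. -/
lemma F_monotoneOn {p : ℝ} (hp : 1 < p) : MonotoneOn (F p) (Set.Icc (1/2 : ℝ) 1) := by
  have hp0 : (0:ℝ) < p := by linarith
  apply monotoneOn_of_deriv_nonneg (convex_Icc _ _)
  · exact (F_continuousOn hp0).mono (by intro t ht; exact ⟨by linarith [ht.1], ht.2⟩)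
  · intro t ht
    rw [interior_Icc] at ht
    exact (hasDerivAt_F hp (by linarith [ht.1]) ht.2).differentiableAt.differentiableWithinAt
  · intro t ht
    rw [interior_Icc] at ht
    have h0 : (0:ℝ) < t := by linarith [ht.1]
    rw [(hasDerivAt_F hp h0 ht.2).deriv]
    have : (1 - t) ^ (p - 1) ≤ t ^ (p - 1) :=
      Real.rpow_le_rpow (by linarith [ht.2]) (by linarith [ht.1]) (by linarith)
    nlinarith

/-- chord bound for exp. -/
lemma exp_chord {θ L : ℝ} (h0 : 0 ≤ θ) (h1 : θ ≤ 1) :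
    Real.exp (θ * L) ≤ 1 - θ + θ * Real.exp L := by
  have := convexOn_exp.2 (Set.mem_univ (0:ℝ)) (Set.mem_univ L)
    (by linarith : (0:ℝ) ≤ 1 - θ) h0 (by ring)
  simpa [smul_eq_mul, Real.exp_zero] using this

/-- Upper bound: `G p y ≤ 2 p log 2 y` on `[0,1]`. -/
lemma G_upper {p : ℝ} (hp : 1 < p) {y : ℝ} (h0 : 0 ≤ y) (h1 : y ≤ 1) :
    G p y ≤ 2 * p * Real.log 2 * y := by
  have hp0 : (0:ℝ) < p := by linarith
  rcases le_or_gt y (1/2) with hy | hy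
  · have hy1 : (0:ℝ) < 1 - y := by linarith
    have hFy : (1 - y) ^ p ≤ F p y := by
      have : (0:ℝ) ≤ y ^ p := Real.rpow_nonneg h0 p
      unfold F; linarith
    have hlog : p * Real.log (1 - y) ≤ Real.log (F p y) := by
      have := (Real.log_le_log_iff (Real.rpow_pos_of_pos hy1 p) (F_pos hp0 h0 h1)).2 hFy
      rwa [Real.log_rpow hy1] at this
    have hc : Real.exp (2 * y * (-Real.log 2)) ≤ 1 - y := by
      have h := exp_chord (θ := 2 * y) (L := -Real.log 2) (by linarith) (by linarith)
      rw [Real.exp_neg, Real.exp_log two_pos] at h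
      calc Real.exp (2 * y * (-Real.log 2)) ≤ 1 - 2 * y + 2 * y * (2:ℝ)⁻¹ := h
        _ = 1 - y := by ring
    have hlog2 : 2 * y * (-Real.log 2) ≤ Real.log (1 - y) := by
      have := (Real.log_le_log_iff (Real.exp_pos _) hy1).2 hc
      rwa [Real.log_exp] at this
    have hmul : p * (2 * y * (-Real.log 2)) ≤ p * Real.log (1 - y) :=
      mul_le_mul_of_nonneg_left hlog2 hp0.le
    unfold G
    nlinarith
  · -- y ≥ 1/2 : use F p y ≥ F p (1/2) = 2^(1-p)
    have hmono := F_monotoneOn hp (Set.mem_Icc.2 ⟨le_refl _, by norm_num⟩)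
      (Set.mem_Icc.2 ⟨hy.le, h1⟩) hy.le
    have hFhalf : F p (1/2 : ℝ) = (2:ℝ) ^ (1 - p) := by
      have h2 : ((1:ℝ)/2) ^ p = (2:ℝ) ^ (-p) := by
        rw [one_div, Real.inv_rpow (by norm_num : (0:ℝ) ≤ 2),
          ← Real.rpow_neg (by norm_num : (0:ℝ) ≤ 2)]
      have hFh : F p (1/2:ℝ) = ((1:ℝ)/2) ^ p + ((1:ℝ)/2) ^ p := by norm_num [F]
      rw [hFh, h2, show (1:ℝ) - p = 1 + (-p) by ring, Real.rpow_add two_pos, Real.rpow_one]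
      ring
    have hlogF : (1 - p) * Real.log 2 ≤ Real.log (F p y) := by
      have := (Real.log_le_log_iff (F_pos hp0 (by norm_num) (by norm_num))
        (F_pos hp0 h0 h1)).2 hmono
      rwa [hFhalf, Real.log_rpow two_pos] at this
    have hl2 : (0:ℝ) < Real.log 2 := Real.log_pos one_lt_two
    have hq : (0:ℝ) ≤ p * (2*y - 1) := mul_nonneg hp0.le (by linarith)
    have hstep := mul_le_mul_of_nonneg_left
      (show p - 1 ≤ 2*p*y by nlinarith) hl2.le
    unfold G
    nlinarith [hstep]

/-- Lower bound for `p ≥ 2`: `2 log 2 x ≤ G p x` on `[0, 1/2]`. -/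
lemma G_lower {p : ℝ} (hp : 2 ≤ p) {x : ℝ} (h0 : 0 ≤ x) (h1 : x ≤ 1/2) :
    2 * Real.log 2 * x ≤ G p x := by
  have hp0 : (0:ℝ) < p := by linarith
  have hx1 : (0:ℝ) < 1 - x := by linarith
  have hsq : ∀ u : ℝ, 0 < u → u ≤ 1 → u ^ p ≤ u * u := by
    intro u hu0 hu1
    calc u ^ p ≤ u ^ (2:ℝ) := Real.rpow_le_rpow_of_exponent_ge hu0 hu1 hp
      _ = u * u := by
        rw [show (2:ℝ) = ((2:ℕ):ℝ) by norm_num, Real.rpow_natCast]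
        ring
  have hxp : x ^ p ≤ x * x := by
    rcases eq_or_lt_of_le h0 with rfl | hx
    · rw [Real.zero_rpow (by linarith : p ≠ 0)]; norm_num
    · exact hsq x hx (by linarith)
  have hxp' : (1 - x) ^ p ≤ (1 - x) * (1 - x) := hsq (1 - x) hx1 (by linarith)
  have hFle : F p x ≤ 1 - 2 * x + 2 * x * x := by
    unfold F; nlinarith
  have hexp : Real.exp (2 * x * Real.log 2) ≤ 1 + 2 * x := by
    have h := exp_chord (θ := 2 * x) (L := Real.log 2) (by linarith) (by linarith)
    rw [Real.exp_log two_pos] at h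
    calc Real.exp (2 * x * Real.log 2) ≤ 1 - 2 * x + 2 * x * 2 := h
      _ = 1 + 2 * x := by ring
  have hFpos : (0:ℝ) < F p x := F_pos hp0 h0 (by linarith)
  have hprod : F p x * Real.exp (2 * x * Real.log 2) ≤ 1 := by
    have h1' : F p x * Real.exp (2 * x * Real.log 2) ≤ (1 - 2*x + 2*x*x) * (1 + 2*x) := by
      apply mul_le_mul hFle hexp (Real.exp_pos _).le
      nlinarith
    nlinarith
  have hlog : Real.log (F p x * Real.exp (2 * x * Real.log 2)) ≤ 0 := by
    have := (Real.log_le_log_iff (by positivity) one_pos).2 hprod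
    simpa using this
  rw [Real.log_mul hFpos.ne' (Real.exp_pos _).ne', Real.log_exp] at hlog
  unfold G
  linarith

/-- Core inequality: `x * G p y ≤ p * y * G p x` for `0 < x ≤ y ≤ 1`. -/
lemma core {p x y : ℝ} (hp : 1 < p) (hx0 : 0 < x) (hxy : x ≤ y) (hy1 : y ≤ 1) :
    x * G p y ≤ p * y * G p x := by
  have hp0 : (0:ℝ) < p := by linarith
  have hy0 : (0:ℝ) < y := lt_of_lt_of_le hx0 hxy
  have hx1 : x ≤ 1 := le_trans hxy hy1
  have hGx : 0 ≤ G p x := G_nonneg hp.le hx0.le hx1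
  have hGy : 0 ≤ G p y := G_nonneg hp.le hy0.le hy1
  rcases le_total p 2 with hple | hpge
  · -- concavity case
    have hconc := concaveG hp hple
    have hmemy : y ∈ Set.Icc (0:ℝ) 1 := ⟨hy0.le, hy1⟩
    have hmem0 : (0:ℝ) ∈ Set.Icc (0:ℝ) 1 := ⟨le_refl _, zero_le_one⟩
    have ha : 0 ≤ x / y := by positivity
    have hb : 0 ≤ 1 - x / y := by
      have : x / y ≤ 1 := (div_le_one hy0).2 hxy
      linarith
    have hcomb := hconc.2 hmemy hmem0 ha hb (by ring)
    have hG0 : G p 0 = 0 := by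
      unfold G F
      rw [Real.zero_rpow hp0.ne']
      norm_num
    rw [smul_eq_mul, smul_eq_mul, smul_eq_mul, smul_eq_mul] at hcomb
    rw [mul_zero, add_zero, hG0, mul_zero, add_zero] at hcomb
    rw [div_mul_cancel₀ _ hy0.ne'] at hcomb
    -- hcomb : x / y * G p y ≤ G p x
    calc x * G p y = y * (x / y * G p y) := by field_simp
      _ ≤ y * G p x := mul_le_mul_of_nonneg_left hcomb hy0.le
      _ ≤ p * y * G p x := by
          nlinarith [mul_nonneg (mul_nonneg (show (0:ℝ) ≤ p - 1 by linarith) hy0.le) hGx]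
  · -- p ≥ 2
    rcases le_total x (1/2) with hxh | hxh
    · -- x ≤ 1/2: combine upper and lower bounds
      have hub := G_upper hp hy0.le hy1
      have hlb := G_lower hpge hx0.le hxh
      calc x * G p y ≤ x * (2 * p * Real.log 2 * y) :=
            mul_le_mul_of_nonneg_left hub hx0.le
        _ = p * y * (2 * Real.log 2 * x) := by ring
        _ ≤ p * y * G p x := by
            apply mul_le_mul_of_nonneg_left hlb
            positivity
    · -- x ≥ 1/2: F monotone on [1/2,1]
      have hmono := F_monotoneOn hp (Set.mem_Icc.2 ⟨hxh, hx1⟩)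
        (Set.mem_Icc.2 ⟨le_trans hxh hxy, hy1⟩) hxy
      have hGyx : G p y ≤ G p x := by
        have := (Real.log_le_log_iff (F_pos hp0 hx0.le hx1) (F_pos hp0 hy0.le hy1)).2 hmono
        unfold G; linarith
      calc x * G p y ≤ x * G p x := mul_le_mul_of_nonneg_left hGyx hx0.le
        _ ≤ y * G p x := mul_le_mul_of_nonneg_right hxy hGx
        _ ≤ p * y * G p x := by
            nlinarith [mul_nonneg (mul_nonneg (show (0:ℝ) ≤ p - 1 by linarith) hy0.le) hGx]

end RenyiAux

/-- The Renyi entropy function `h_p(x) = (1/(1-p)) log₂ (x^p + (1-x)^p)`. -/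
noncomputable def renyiEnt (p x : ℝ) : ℝ :=
  (1 / (1 - p)) * Real.logb 2 (x ^ p + (1 - x) ^ p)

theorem renyiEnt_mul_le (p c x : ℝ) (hp : 1 < p) (hc : 1 ≤ c)
    (hx : x ∈ Set.Icc (0 : ℝ) 1) (hcx : c * x ∈ Set.Icc (0 : ℝ) 1) :
    renyiEnt p (c * x) ≤ p * c * renyiEnt p x := by
  obtain ⟨hx0, hx1⟩ := hx
  obtain ⟨hcx0, hcx1⟩ := hcx
  have hp0 : (0:ℝ) < p := by linarith
  have hl2 : (0:ℝ) < Real.log 2 := Real.log_pos one_lt_two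
  have hD : (0:ℝ) < (p - 1) * Real.log 2 := by
    apply mul_pos (by linarith) hl2
  have hrw : ∀ t : ℝ, renyiEnt p t = RenyiAux.G p t / ((p - 1) * Real.log 2) := by
    intro t
    unfold renyiEnt RenyiAux.G RenyiAux.F Real.logb
    have h1p : (1:ℝ) - p ≠ 0 := by linarith
    have h1p' : p - 1 ≠ 0 := by linarith
    field_simp
    ring
  rcases eq_or_lt_of_le hx0 with rfl | hxpos
  · -- x = 0
    rw [mul_zero]
    have : renyiEnt p 0 = 0 := by
      rw [hrw]
      have : RenyiAux.G p 0 = 0 := by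
        unfold RenyiAux.G RenyiAux.F
        rw [Real.zero_rpow hp0.ne']
        norm_num
      rw [this, zero_div]
    rw [this, mul_zero]
  · -- x > 0
    have hxy : x ≤ c * x := le_mul_of_one_le_left hx0 hc
    have hcore := RenyiAux.core hp hxpos hxy hcx1
    rw [hrw (c * x), hrw x]
    rw [div_le_iff₀ hD]
    have expand : p * c * (RenyiAux.G p x / ((p - 1) * Real.log 2)) * ((p - 1) * Real.log 2)
        = p * c * RenyiAux.G p x := by
      have h1p' : p - 1 ≠ 0 := by linarith
      field_simp
    rw [expand]
    -- need : G p (c*x) ≤ p * c * G p x; from hcore : x * G p (c*x) ≤ p * (c*x) * G p x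
    have := (mul_le_mul_iff_right₀ hxpos).mp (by linarith [hcore] :
      x * RenyiAux.G p (c * x) ≤ x * (p * c * RenyiAux.G p x))
    linarith
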